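/- Let {ε_n}_{n≥0} be a sequence of complex numbers and C < ∞ a constant such that for all n, C⁻¹ ≤ Im ε_n and |ε_n| ≤ C, and such that Σ_n |ε_{n+1} − ε_n|² ≤ C. Then there is a constant C₁ < ∞, depending only on C, such that for all k ≤ l, |Σ_{n=k}^{l} (ε_{n+1} − ε_n)/ε_n| < C₁. -/

import Mathlib

open Complex Finset

theorem sum_ratio_increments_bounded (C : ℝ) (hC : 0 < C) :
    ∃ C₁ : ℝ, ∀ ε : ℕ → ℂ,
      (∀ n, C⁻¹ ≤ (ε n).im) →
      (∀ n, ‖ε n‖ ≤ C) →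
      (∑' n : ℕ, ‖ε (n + 1) - ε n‖ ^ 2) ≤ C →
      Summable (fun n => ‖ε (n + 1) - ε n‖ ^ 2) →
      ∀ k l : ℕ, k ≤ l →
        ‖∑ n ∈ Finset.Icc k l, (ε (n + 1) - ε n) / ε n‖ < C₁ := by
  obtain ⟨B, hB⟩ : ∃ B : ℝ, B = 2 * C ^ 2 + 2 * (|Real.log C| + Real.pi) := ⟨_, rfl⟩
  obtain ⟨K, hK⟩ : ∃ K : ℝ, K = 4 * C ^ 2 * B + C ^ 2 := ⟨_, rfl⟩
  have hπ : (0:ℝ) < Real.pi := Real.pi_pos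
  have hBpos : 0 < B := by rw [hB]; positivity
  have hKpos : 0 < K := by rw [hK, hB]; positivity
  refine ⟨2 * (|Real.log C| + Real.pi) + K * C + 1, ?_⟩
  intro ε him habs htsum hsumm k l hkl
  have hCinv : 0 < C⁻¹ := inv_pos.mpr hC
  have himpos : ∀ n, 0 < (ε n).im := fun n => lt_of_lt_of_le hCinv (him n)
  have hne : ∀ n, ε n ≠ 0 := by
    intro n h
    have := himpos n
    rw [h] at this
    simp at this
  have habslb : ∀ n, C⁻¹ ≤ ‖ε n‖ := fun n =>
    (him n).trans ((le_abs_self _).trans (Complex.abs_im_le_norm _))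
  have hC1 : 1 ≤ C := by
    have h0 := (habslb 0).trans (habs 0)
    have h1 : C * C⁻¹ = 1 := mul_inv_cancel₀ hC.ne'
    nlinarith
  have hlogC : 0 ≤ Real.log C := Real.log_nonneg hC1
  have hargpos : ∀ n, 0 < (ε n).arg := by
    intro n
    rcases lt_or_eq_of_le (Complex.arg_nonneg_iff.mpr (himpos n).le) with h | h
    · exact h
    · exfalso
      have := (Complex.arg_eq_zero_iff.mp h.symm).2
      exact (himpos n).ne' this
  have harglt : ∀ n, (ε n).arg < Real.pi := by
    intro n
    exact Complex.arg_lt_pi_iff.mpr (Or.inr (himpos n).ne')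
  -- log of quotient
  have hlogdiv : ∀ m n : ℕ, Complex.log (ε m / ε n)
      = Complex.log (ε m) - Complex.log (ε n) := by
    intro m n
    have hargne : (ε n).arg ≠ Real.pi := (harglt n).ne
    rw [div_eq_mul_inv, Complex.log_mul (hne m) (inv_ne_zero (hne n)) ?_,
      Complex.log_inv _ hargne, sub_eq_add_neg]
    rw [Complex.arg_inv, if_neg hargne]
    constructor
    · have := harglt n
      have := hargpos m
      linarith
    · have := hargpos n
      have := harglt m
      linarith
  -- bound on |log (ε n)|
  have hlogbd : ∀ n, ‖Complex.log (ε n)‖ ≤ |Real.log C| + Real.pi := by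
    intro n
    refine (Complex.norm_le_abs_re_add_abs_im _).trans ?_
    rw [Complex.log_re, Complex.log_im]
    have h1 : |Real.log (‖ε n‖)| ≤ |Real.log C| := by
      rw [_root_.abs_of_nonneg hlogC]
      rw [abs_le]
      constructor
      · have : Real.log C⁻¹ ≤ Real.log (‖ε n‖) :=
          Real.log_le_log hCinv (habslb n)
        rwa [Real.log_inv] at this
      · exact Real.log_le_log (hCinv.trans_le (habslb n)) (habs n)
    have h2 : |(ε n).arg| ≤ Real.pi := Complex.abs_arg_le_pi _
    linarith
  -- per-term key bound
  have key : ∀ n : ℕ,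
      ‖(ε (n + 1) - ε n) / ε n
        - (Complex.log (ε (n + 1)) - Complex.log (ε n))‖
      ≤ K * ‖ε (n + 1) - ε n‖ ^ 2 := by
    intro n
    set w : ℂ := (ε (n + 1) - ε n) / ε n with hw
    set a : ℝ := ‖ε (n + 1) - ε n‖ with ha
    have ha0 : 0 ≤ a := norm_nonneg _
    have habsn : 0 < ‖ε n‖ := hCinv.trans_le (habslb n)
    have hwabs : ‖w‖ = a / ‖ε n‖ := by
      rw [hw, norm_div]
    have hwle : ‖w‖ ≤ C * a := by
      rw [hwabs, div_le_iff₀ habsn]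
      have h1 : 1 ≤ C * ‖ε n‖ := by
        have h2 := mul_le_mul_of_nonneg_left (habslb n) hC.le
        rwa [mul_inv_cancel₀ hC.ne'] at h2
      nlinarith [mul_le_mul_of_nonneg_left h1 ha0]
    have hale : a ≤ 2 * C := by
      calc a ≤ ‖ε (n + 1)‖ + ‖ε n‖ :=
            (norm_sub_le _ _)
        _ ≤ 2 * C := by have := habs (n+1); have := habs n; linarith
    have hLbd : ‖Complex.log (ε (n + 1)) - Complex.log (ε n)‖
        ≤ 2 * (|Real.log C| + Real.pi) := by
      calc ‖Complex.log (ε (n + 1)) - Complex.log (ε n)‖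
          ≤ ‖Complex.log (ε (n + 1))‖ + ‖Complex.log (ε n)‖ :=
            norm_sub_le _ _
        _ ≤ 2 * (|Real.log C| + Real.pi) := by
            have := hlogbd (n+1); have := hlogbd n; linarith
    rcases le_or_gt (‖w‖) (1/2) with hsmall | hbig
    · -- small case: use log(1 + w)
      have hquot : ε (n + 1) / ε n = 1 + w := by
        rw [hw]
        field_simp [hne n]
        ring
      have hlogeq : Complex.log (ε (n + 1)) - Complex.log (ε n)
          = Complex.log (1 + w) := by
        rw [← hlogdiv (n+1) n, hquot]
      rw [hlogeq]
      have hwn : ‖w‖ = ‖w‖ := rfl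
      have hlt1 : ‖w‖ < 1 := by rw [hwn]; linarith
      have hbd := Complex.norm_log_one_add_sub_self_le hlt1
      have hinv2 : (1 - ‖w‖)⁻¹ ≤ 2 := by
        rw [hwn]
        rw [inv_le_iff_one_le_mul₀ (by linarith)]
        linarith
      have : ‖Complex.log (1 + w) - w‖ ≤ ‖w‖ ^ 2 := by
        calc ‖Complex.log (1 + w) - w‖ ≤ ‖w‖ ^ 2 * (1 - ‖w‖)⁻¹ / 2 := hbd
          _ ≤ ‖w‖ ^ 2 * 2 / 2 := by
              apply div_le_div_of_nonneg_right _ (by norm_num)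
              exact mul_le_mul_of_nonneg_left hinv2 (by positivity)
          _ = ‖w‖ ^ 2 := by ring
      have h2 : ‖w - Complex.log (1 + w)‖ ≤ C ^ 2 * a ^ 2 := by
        rw [← norm_neg, neg_sub]
        calc ‖Complex.log (1 + w) - w‖ ≤ ‖w‖ ^ 2 := this
          _ ≤ (C * a) ^ 2 := by
              apply pow_le_pow_left₀ (norm_nonneg _)
              rw [hwn]; exact hwle
          _ = C ^ 2 * a ^ 2 := by ring
      calc ‖w - Complex.log (1 + w)‖ ≤ C ^ 2 * a ^ 2 := h2
        _ ≤ K * a ^ 2 := by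
            apply mul_le_mul_of_nonneg_right _ (by positivity)
            rw [hK]; nlinarith
    · -- big case
      have hage : 1 / (2 * C) < a := by
        by_contra h
        push_neg at h
        have h2 : ‖w‖ ≤ C * (1 / (2 * C)) :=
          hwle.trans (mul_le_mul_of_nonneg_left h hC.le)
        have h3 : C * (1 / (2 * C)) = 1 / 2 := by
          field_simp
        rw [h3] at h2
        linarith
      have ha2 : 1 ≤ 4 * C ^ 2 * a ^ 2 := by
        have h4 : (1 / (2 * C)) ^ 2 < a ^ 2 := by
          apply pow_lt_pow_left₀ hage (by positivity)
          norm_num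
        have : (1 / (2 * C)) ^ 2 = 1 / (4 * C ^ 2) := by ring
        rw [this] at h4
        rw [div_lt_iff₀ (by positivity)] at h4
        nlinarith
      have hbd : ‖w - (Complex.log (ε (n + 1)) - Complex.log (ε n))‖ ≤ B := by
        calc ‖w - (Complex.log (ε (n + 1)) - Complex.log (ε n))‖
            ≤ ‖w‖ + ‖Complex.log (ε (n + 1)) - Complex.log (ε n)‖ :=
              norm_sub_le _ _
          _ ≤ C * a + 2 * (|Real.log C| + Real.pi) := add_le_add hwle hLbd
          _ ≤ B := by rw [hB]; nlinarith
      calc ‖w - (Complex.log (ε (n + 1)) - Complex.log (ε n))‖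
          ≤ B := hbd
        _ = B * 1 := (mul_one B).symm
        _ ≤ B * (4 * C ^ 2 * a ^ 2) := mul_le_mul_of_nonneg_left ha2 hBpos.le
        _ ≤ K * a ^ 2 := by rw [hK]; nlinarith
  -- telescoping
  have tele : ∀ (f : ℕ → ℂ) (m : ℕ), k ≤ m →
      ∑ n ∈ Finset.Icc k m, (f (n + 1) - f n) = f (m + 1) - f k := by
    intro f m hm
    induction m with
    | zero =>
      have : k = 0 := Nat.le_zero.mp hm
      subst this
      simp
    | succ p ih =>
      rcases Nat.lt_or_ge k (p + 1) with h | h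
      · rw [Finset.sum_Icc_succ_top (by omega), ih (by omega)]
        ring
      · have : k = p + 1 := le_antisymm hm h
        subst this
        simp
  -- main estimate
  have hsplit : (∑ n ∈ Finset.Icc k l, (ε (n + 1) - ε n) / ε n)
      = (Complex.log (ε (l + 1)) - Complex.log (ε k))
        + ∑ n ∈ Finset.Icc k l,
            ((ε (n + 1) - ε n) / ε n - (Complex.log (ε (n + 1)) - Complex.log (ε n))) := by
    rw [← tele (fun n => Complex.log (ε n)) l hkl]
    rw [← Finset.sum_add_distrib]
    apply Finset.sum_congr rfl
    intro n _
    ring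
  rw [hsplit]
  have h1 : ‖Complex.log (ε (l + 1)) - Complex.log (ε k)‖
      ≤ 2 * (|Real.log C| + Real.pi) := by
    calc ‖Complex.log (ε (l + 1)) - Complex.log (ε k)‖
        ≤ ‖Complex.log (ε (l + 1))‖ + ‖Complex.log (ε k)‖ :=
          norm_sub_le _ _
      _ ≤ 2 * (|Real.log C| + Real.pi) := by
          have := hlogbd (l + 1); have := hlogbd k; linarith
  have h2 : ‖∑ n ∈ Finset.Icc k l,
      ((ε (n + 1) - ε n) / ε n - (Complex.log (ε (n + 1)) - Complex.log (ε n)))‖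
      ≤ K * C := by
    calc ‖∑ n ∈ Finset.Icc k l,
          ((ε (n + 1) - ε n) / ε n - (Complex.log (ε (n + 1)) - Complex.log (ε n)))‖
        ≤ ∑ n ∈ Finset.Icc k l, ‖(ε (n + 1) - ε n) / ε n - (Complex.log (ε (n + 1)) - Complex.log (ε n))‖ :=
          norm_sum_le _ _
      _ ≤ ∑ n ∈ Finset.Icc k l, K * ‖ε (n + 1) - ε n‖ ^ 2 :=
          Finset.sum_le_sum (fun n _ => key n)
      _ = K * ∑ n ∈ Finset.Icc k l, ‖ε (n + 1) - ε n‖ ^ 2 := by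
          rw [Finset.mul_sum]
      _ ≤ K * C := by
          apply mul_le_mul_of_nonneg_left _ hKpos.le
          calc (∑ n ∈ Finset.Icc k l, ‖ε (n + 1) - ε n‖ ^ 2)
              ≤ ∑' n : ℕ, ‖ε (n + 1) - ε n‖ ^ 2 :=
                Summable.sum_le_tsum _ (fun _ _ => by positivity) hsumm
            _ ≤ C := htsum
  calc ‖(Complex.log (ε (l + 1)) - Complex.log (ε k))
        + ∑ n ∈ Finset.Icc k l,
            ((ε (n + 1) - ε n) / ε n - (Complex.log (ε (n + 1)) - Complex.log (ε n)))‖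
      ≤ ‖Complex.log (ε (l + 1)) - Complex.log (ε k)‖
        + ‖∑ n ∈ Finset.Icc k l,
            ((ε (n + 1) - ε n) / ε n - (Complex.log (ε (n + 1)) - Complex.log (ε n)))‖ :=
        norm_add_le _ _
    _ ≤ 2 * (|Real.log C| + Real.pi) + K * C := add_le_add h1 h2
    _ < 2 * (|Real.log C| + Real.pi) + K * C + 1 := by linarith
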